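/- Let n, ℓ, N ≥ 1, let S_1, …, S_ℓ ⊆ {1,…,n}, and let T ⊆ {1,…,ℓ} be an exact cover (the S_i for i ∈ T are pairwise disjoint with union {1,…,n}). For each k = 1,…,N let p_k be an integer, and let g_k, a_j^{(k)} (j = 1,…,n), z_j (j = 1,…,n) be integers. Suppose c_1, …, c_ℓ and d are integers such that for every i and every k, c_i · ∏_{j∈S_i} z_j ≡ ρ_{k,i}·g_k + ∏_{j∈S_i} a_j^{(k)} (mod p_k) for some integers ρ_{k,i}, and for every k, d · ∏_{j=1}^n z_j ≡ σ_k·g_k + ∏_{j=1}^n a_j^{(k)} (mod p_k) for some integer σ_k. Then for every k there exists an integer t_k such that (d − ∏_{i∈T} c_i) · ∏_{j=1}^n z_j ≡ t_k·g_k (mod p_k); i.e., d − ∏_{i∈T} c_i is a top-level encoding of 0. -/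

import Mathlib

private lemma prod_modeq_aux {ι : Type*} [DecidableEq ι] (m g : ℤ) :
    ∀ (T : Finset ι) (x A : ι → ℤ),
      (∀ i ∈ T, ∃ ρ : ℤ, x i ≡ ρ * g + A i [ZMOD m]) →
      ∃ u : ℤ, ∏ i ∈ T, x i ≡ u * g + ∏ i ∈ T, A i [ZMOD m] := by
  intro T
  induction T using Finset.induction_on with
  | empty => intro x A _; exact ⟨0, by simp⟩
  | insert _ _ hni ih =>
    rename_i i T'
    intro x A h
    obtain ⟨ρ, hρ⟩ := h i (Finset.mem_insert_self i T')
    obtain ⟨u, hu⟩ := ih x A fun j hj => h j (Finset.mem_insert_of_mem hj)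
    refine ⟨ρ * g * u + ρ * ∏ j ∈ T', A j + A i * u, ?_⟩
    rw [Finset.prod_insert hni, Finset.prod_insert hni]
    calc x i * ∏ j ∈ T', x j
        ≡ (ρ * g + A i) * (u * g + ∏ j ∈ T', A j) [ZMOD m] := hρ.mul hu
      _ = (ρ * g * u + ρ * ∏ j ∈ T', A j + A i * u) * g + A i * ∏ j ∈ T', A j := by ring

/-- Decryption correctness for witness encryption over asymmetric CLT13: if `T`
is an exact cover of `{1,…,n}` by the sets `S i`, each `c i` encodes
`∏ j ∈ S i, a k j` at level `1_{S i}` (denominator `∏ j ∈ S i, z j` modulo each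
secret prime `p k`), and `d` encodes `∏ j, a k j` at the top level, then
`d - ∏ i ∈ T, c i` is a top-level encoding of `0`: its top-level numerator is
divisible by `g k` modulo each `p k`. -/
theorem witness_encryption_decrypt_zero (n ℓ N : ℕ)
    (hn : 1 ≤ n) (hℓ : 1 ≤ ℓ) (hN : 1 ≤ N)
    (S : Fin ℓ → Finset (Fin n)) (T : Finset (Fin ℓ))
    (hdisj : ∀ i ∈ T, ∀ i' ∈ T, i ≠ i' → Disjoint (S i) (S i'))
    (hcover : T.biUnion S = Finset.univ)
    (p g : Fin N → ℤ) (a : Fin N → Fin n → ℤ) (z : Fin n → ℤ)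
    (c : Fin ℓ → ℤ) (d : ℤ)
    (hc : ∀ i : Fin ℓ, ∀ k : Fin N, ∃ ρ : ℤ,
      c i * ∏ j ∈ S i, z j ≡ ρ * g k + ∏ j ∈ S i, a k j [ZMOD p k])
    (hd : ∀ k : Fin N, ∃ σ : ℤ,
      d * ∏ j, z j ≡ σ * g k + ∏ j, a k j [ZMOD p k]) :
    ∀ k : Fin N, ∃ t : ℤ,
      (d - ∏ i ∈ T, c i) * ∏ j, z j ≡ t * g k [ZMOD p k] := by
  intro k
  have hpd : ∀ (f : Fin n → ℤ), ∏ j, f j = ∏ i ∈ T, ∏ j ∈ S i, f j := by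
    intro f
    rw [← hcover, Finset.prod_biUnion]
    intro i hi i' hi' hne
    exact hdisj i hi i' hi' hne
  obtain ⟨u, hu⟩ := prod_modeq_aux (p k) (g k) T
      (fun i => c i * ∏ j ∈ S i, z j) (fun i => ∏ j ∈ S i, a k j)
      (fun i _ => hc i k)
  obtain ⟨σ, hσ⟩ := hd k
  refine ⟨σ - u, ?_⟩
  have h1 : (∏ i ∈ T, c i) * ∏ j, z j ≡ u * g k + ∏ j, a k j [ZMOD p k] := by
    rw [hpd z, hpd (a k), ← Finset.prod_mul_distrib]; exact hu
  have := hσ.sub h1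
  calc (d - ∏ i ∈ T, c i) * ∏ j, z j
      = d * ∏ j, z j - (∏ i ∈ T, c i) * ∏ j, z j := by ring
    _ ≡ (σ * g k + ∏ j, a k j) - (u * g k + ∏ j, a k j) [ZMOD p k] := this
    _ = (σ - u) * g k := by ring
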